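/- Half-LP lower bound for the online matching algorithm's routed reward: in the two-sided matching model, if x* is any optimal solution of the deterministic LP and p_{ijts}(M) are the routing probabilities built from x*, then Σ_{i,j,t,s} r_{ijts} · E[ p_{ijts}(M) ] ≥ (1/2) · LP* ≥ (1/2) · E[V^OFF(Λ,M)]. -/

import Mathlib

open MeasureTheory ProbabilityTheory


lemma myIntegrableBdd {Ω : Type*} [MeasurableSpace Ω] (μ : Measure Ω) [IsFiniteMeasure μ]
    (f : Ω → ℝ) (C : ℝ) (hf : Measurable f) (hb : ∀ ω, |f ω| ≤ C) : Integrable f μ :=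
  ⟨hf.aestronglyMeasurable, HasFiniteIntegral.of_bounded (C := C) (ae_of_all _ hb)⟩

lemma myInt01 {Ω : Type*} [MeasurableSpace Ω] (μ : Measure Ω) [IsProbabilityMeasure μ]
    (f : Ω → ℝ) (hf : Measurable f) (h01 : ∀ ω, f ω = 0 ∨ f ω = 1) :
    ∫ ω, f ω ∂μ = (μ {ω | f ω = 1}).toReal := by
  have hs : MeasurableSet {ω | f ω = 1} := hf (measurableSet_singleton 1)
  have hfeq : ∀ ω, f ω = Set.indicator {ω | f ω = 1} (fun _ => (1:ℝ)) ω := by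
    intro ω
    rcases h01 ω with h | h
    · rw [Set.indicator_of_notMem (by simp [Set.mem_setOf_eq, h]), h]
    · rw [Set.indicator_of_mem (by simpa [Set.mem_setOf_eq] using h), h]
  calc ∫ ω, f ω ∂μ = ∫ ω, Set.indicator {ω | f ω = 1} (fun _ => (1:ℝ)) ω ∂μ := by
        simp_rw [← hfeq]
    _ = (μ {ω | f ω = 1}).toReal := by rw [integral_indicator_const _ hs]; simp; rfl

lemma key_frac (l c Bv : ℝ) (hl : 0 < l) (hc : 0 < c) (hcl : c ≤ l) (hB : 0 ≤ Bv) :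
    3/4 - Bv/(4*l) ≤ min l (c + Bv) / (c + Bv) := by
  have hA : 0 < c + Bv := by linarith
  have h1 : l/(l + Bv) ≤ min l (c+Bv) / (c+Bv) := by
    rcases le_total (c+Bv) l with h | h
    · rw [min_eq_right h, div_self (ne_of_gt hA), div_le_one (by linarith)]
      linarith
    · rw [min_eq_left h]
      gcongr
      all_goals linarith
  have hd : Bv/(4*l) * (4*l) = Bv := div_mul_cancel₀ _ (by positivity)
  have hd0 : 0 ≤ Bv/(4*l) := by positivity
  have h2 : 3/4 - Bv/(4*l) ≤ l/(l+Bv) := by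
    rw [le_div_iff₀ (by linarith)]
    nlinarith [sq_nonneg (l - Bv)]
  linarith

lemma part1_key {Ω : Type*} [MeasurableSpace Ω] (μ : Measure Ω) [IsProbabilityMeasure μ]
    {T J : ℕ} (t : Fin T) (j : Fin J) (s : Fin T)
    (lam0 : ℝ) (hlam0 : 0 < lam0)
    (mu : Fin J → Fin T → ℝ) (hmu_pos : ∀ j s, 0 < mu j s)
    (M : Fin J → Fin T → Ω → ℝ) (hMmeas : ∀ j s, Measurable (M j s))
    (hM01 : ∀ j s ω, M j s ω = 0 ∨ M j s ω = 1)
    (hMmu : ∀ j s, ∫ ω, M j s ω ∂μ = mu j s)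
    (hMindep : ∀ j₁ s₁ j₂ s₂, ((j₁,s₁) : Fin J × Fin T) ≠ (j₂,s₂) →
      IndepFun (M j₁ s₁) (M j₂ s₂) μ)
    (x : Fin J → Fin T → ℝ) (hx_nonneg : ∀ j s, 0 ≤ x j s)
    (hx_lam : ∑ j', ∑ s', x j' s' ≤ lam0)
    (hx_prod : ∀ j s, x j s ≤ lam0 * mu j s)
    (A : Ω → ℝ) (hA : ∀ ω, A ω = ∑ j', ∑ s' ∈ Finset.Iic t, M j' s' ω * x j' s' / mu j' s')
    (hst : s ≤ t)
    (p : Ω → ℝ)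
    (hp : ∀ ω, p ω = if A ω = 0 then 0
      else (min lam0 (A ω) / A ω) * (M j s ω * x j s / mu j s)) :
    x j s / 2 ≤ ∫ ω, p ω ∂μ := by
  classical
  have hM0le : ∀ j s ω, 0 ≤ M j s ω := fun j s ω => by
    rcases hM01 j s ω with h|h <;> rw [h] <;> norm_num
  have hMle1 : ∀ j s ω, M j s ω ≤ 1 := fun j s ω => by
    rcases hM01 j s ω with h|h <;> rw [h] <;> norm_num
  have hMint : ∀ j s, Integrable (M j s) μ := fun j s =>
    myIntegrableBdd μ _ 1 (hMmeas j s)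
      (fun ω => abs_le.2 ⟨by linarith [hM0le j s ω], hMle1 j s ω⟩)
  have hterm_nonneg : ∀ j' s' (ω : Ω), 0 ≤ M j' s' ω * x j' s' / mu j' s' := fun j' s' ω =>
    div_nonneg (mul_nonneg (hM0le j' s' ω) (hx_nonneg j' s')) (hmu_pos j' s').le
  have hterm_le : ∀ j' s' (ω : Ω), M j' s' ω * x j' s' / mu j' s' ≤ x j' s' / mu j' s' := by
    intro j' s' ω
    gcongr
    · exact (hmu_pos j' s').le
    · exact mul_le_of_le_one_left (hx_nonneg j' s') (hMle1 j' s' ω)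
  have hA0 : ∀ ω, 0 ≤ A ω := by
    intro ω; rw [hA]
    exact Finset.sum_nonneg fun j' _ => Finset.sum_nonneg fun s' _ => hterm_nonneg j' s' ω
  have hAmeas : Measurable A := by
    have : A = fun ω => ∑ j', ∑ s' ∈ Finset.Iic t, M j' s' ω * x j' s' / mu j' s' :=
      funext hA
    rw [this]
    exact Finset.measurable_sum _ (fun j' _ => Finset.measurable_sum _ (fun s' _ =>
      ((hMmeas j' s').mul_const _).div_const _))
  have hp0 : ∀ ω, 0 ≤ p ω := by
    intro ω; rw [hp]
    split
    · exact le_refl _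
    · next h =>
      have hApos : 0 < A ω := lt_of_le_of_ne (hA0 ω) (Ne.symm h)
      exact mul_nonneg (div_nonneg (le_min hlam0.le (hA0 ω)) hApos.le) (hterm_nonneg j s ω)
  by_cases ha : x j s = 0
  · have hzero : ∀ ω, p ω = 0 := by
      intro ω; rw [hp]
      split
      · rfl
      · rw [ha]; ring
    have hI : (∫ ω, p ω ∂μ) = 0 := by simp [hzero]
    rw [hI, ha]; norm_num
  have hapos : 0 < x j s := lt_of_le_of_ne (hx_nonneg j s) (Ne.symm ha)
  set B : Ω → ℝ := fun ω => ∑ j', ∑ s' ∈ Finset.Iic t,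
    if (j', s') = (j, s) then 0 else M j' s' ω * x j' s' / mu j' s' with hBdef
  have hB0 : ∀ ω, 0 ≤ B ω := by
    intro ω
    refine Finset.sum_nonneg fun j' _ => Finset.sum_nonneg fun s' _ => ?_
    split
    · exact le_refl _
    · exact hterm_nonneg j' s' ω
  have hABω : ∀ ω, A ω = B ω + M j s ω * x j s / mu j s := by
    intro ω
    have hsplit : ∀ j' s', M j' s' ω * x j' s' / mu j' s' =
        (if (j', s') = (j, s) then 0 else M j' s' ω * x j' s' / mu j' s')
        + (if (j', s') = (j, s) then M j' s' ω * x j' s' / mu j' s' else 0) := by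
      intro j' s'; split
      · next h =>
        rw [show j' = j from congrArg Prod.fst h, show s' = s from congrArg Prod.snd h]; ring
      · ring
    have hpick : (∑ j', ∑ s' ∈ Finset.Iic t,
        if (j', s') = (j, s) then M j' s' ω * x j' s' / mu j' s' else 0)
        = M j s ω * x j s / mu j s := by
      rw [Finset.sum_eq_single j]
      · rw [Finset.sum_eq_single_of_mem s (Finset.mem_Iic.2 hst)]
        · simp
        · intro b _ hb; simp [Prod.ext_iff, hb]
      · intro b _ hb
        apply Finset.sum_eq_zero; intro s' _; simp [Prod.ext_iff, hb]
      · intro h; exact absurd (Finset.mem_univ j) h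
    rw [hA]
    calc (∑ j', ∑ s' ∈ Finset.Iic t, M j' s' ω * x j' s' / mu j' s')
        = (∑ j', ∑ s' ∈ Finset.Iic t,
            ((if (j', s') = (j, s) then 0 else M j' s' ω * x j' s' / mu j' s')
            + (if (j', s') = (j, s) then M j' s' ω * x j' s' / mu j' s' else 0))) := by
          exact Finset.sum_congr rfl fun j' _ => Finset.sum_congr rfl fun s' _ => hsplit j' s'
      _ = B ω + M j s ω * x j s / mu j s := by
          simp only [Finset.sum_add_distrib]
          rw [hpick, hBdef]
  have hBmeas : Measurable B := by
    rw [hBdef]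
    refine Finset.measurable_sum _ (fun j' _ => Finset.measurable_sum _ (fun s' _ => ?_))
    by_cases h : (j', s') = (j, s)
    · simp only [h, if_true]
      exact measurable_const
    · simp only [h, if_false]
      exact ((hMmeas j' s').mul_const _).div_const _
  set Cb : ℝ := ∑ j', ∑ s' ∈ Finset.Iic t, x j' s' / mu j' s' with hCbdef
  have hBle : ∀ ω, B ω ≤ Cb := by
    intro ω
    rw [hBdef, hCbdef]
    refine Finset.sum_le_sum fun j' _ => Finset.sum_le_sum fun s' _ => ?_
    split
    · exact div_nonneg (hx_nonneg j' s') (hmu_pos j' s').le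
    · exact hterm_le j' s' ω
  have hCb0 : 0 ≤ Cb := by
    rw [hCbdef]
    exact Finset.sum_nonneg fun j' _ => Finset.sum_nonneg fun s' _ =>
      div_nonneg (hx_nonneg j' s') (hmu_pos j' s').le
  have hBint : Integrable B μ :=
    myIntegrableBdd μ _ Cb hBmeas (fun ω => abs_le.2 ⟨by linarith [hB0 ω, hCb0], hBle ω⟩)
  have hMBint : Integrable (fun ω => M j s ω * B ω) μ := by
    refine myIntegrableBdd μ _ Cb ((hMmeas j s).mul hBmeas) (fun ω => abs_le.2 ⟨?_, ?_⟩)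
    · have := mul_nonneg (hM0le j s ω) (hB0 ω); linarith [hCb0]
    · calc M j s ω * B ω ≤ 1 * B ω := by
            apply mul_le_mul_of_nonneg_right (hMle1 j s ω) (hB0 ω)
        _ = B ω := one_mul _
        _ ≤ Cb := hBle ω
  -- the expectation of M * B
  set S : ℝ := ∑ j', ∑ s' ∈ Finset.Iic t, if (j', s') = (j, s) then 0 else x j' s' with hSdef
  have hS0 : 0 ≤ S := by
    rw [hSdef]
    refine Finset.sum_nonneg fun j' _ => Finset.sum_nonneg fun s' _ => ?_
    split
    · exact le_refl _
    · exact hx_nonneg j' s'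
  have hSle : S ≤ lam0 := by
    have h1 : S ≤ ∑ j', ∑ s' ∈ Finset.Iic t, x j' s' := by
      rw [hSdef]
      refine Finset.sum_le_sum fun j' _ => Finset.sum_le_sum fun s' _ => ?_
      split
      · exact hx_nonneg j' s'
      · exact le_refl _
    have h2 : (∑ j', ∑ s' ∈ Finset.Iic t, x j' s') ≤ ∑ j', ∑ s', x j' s' :=
      Finset.sum_le_sum fun j' _ => Finset.sum_le_sum_of_subset_of_nonneg
        (Finset.subset_univ _) (fun s' _ _ => hx_nonneg j' s')
    linarith
  have hMB : ∫ ω, M j s ω * B ω ∂μ = mu j s * S := by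
    have hrw : ∀ ω, M j s ω * B ω = ∑ j', ∑ s' ∈ Finset.Iic t,
        (if (j', s') = (j, s) then 0 else M j s ω * M j' s' ω * (x j' s' / mu j' s')) := by
      intro ω
      rw [hBdef, Finset.mul_sum]
      refine Finset.sum_congr rfl fun j' _ => ?_
      rw [Finset.mul_sum]
      refine Finset.sum_congr rfl fun s' _ => ?_
      split
      · ring
      · ring
    have hint : ∀ (j' : Fin J) (s' : Fin T), Integrable
        (fun ω => if (j', s') = (j, s) then 0 else M j s ω * M j' s' ω * (x j' s' / mu j' s')) μ := by
      intro j' s'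
      split
      · exact integrable_const 0
      · refine myIntegrableBdd μ _ (x j' s' / mu j' s')
          (((hMmeas j s).mul (hMmeas j' s')).mul_const _) (fun ω => abs_le.2 ⟨?_, ?_⟩)
        · have h1 := mul_nonneg (mul_nonneg (hM0le j s ω) (hM0le j' s' ω))
            (div_nonneg (hx_nonneg j' s') (hmu_pos j' s').le)
          have h2 := div_nonneg (hx_nonneg j' s') (hmu_pos j' s').le
          linarith
        · calc M j s ω * M j' s' ω * (x j' s' / mu j' s')
              ≤ 1 * (x j' s' / mu j' s') := by
                apply mul_le_mul
                · exact mul_le_one₀ (hMle1 j s ω) (hM0le j' s' ω) (hMle1 j' s' ω)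
                · exact le_refl _
                · exact div_nonneg (hx_nonneg j' s') (hmu_pos j' s').le
                · norm_num
            _ = x j' s' / mu j' s' := one_mul _
    calc ∫ ω, M j s ω * B ω ∂μ
        = ∫ ω, ∑ j', ∑ s' ∈ Finset.Iic t,
            (if (j', s') = (j, s) then 0 else M j s ω * M j' s' ω * (x j' s' / mu j' s')) ∂μ := by
          exact integral_congr_ae (ae_of_all _ hrw)
      _ = ∑ j', ∑ s' ∈ Finset.Iic t, ∫ ω,
            (if (j', s') = (j, s) then 0 else M j s ω * M j' s' ω * (x j' s' / mu j' s')) ∂μ := by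
          rw [integral_finset_sum _ (fun j' _ => integrable_finset_sum _ (fun s' _ => hint j' s'))]
          exact Finset.sum_congr rfl fun j' _ =>
            integral_finset_sum _ (fun s' _ => hint j' s')
      _ = ∑ j', ∑ s' ∈ Finset.Iic t,
            (if (j', s') = (j, s) then 0 else mu j s * (x j' s')) := by
          refine Finset.sum_congr rfl fun j' _ => Finset.sum_congr rfl fun s' _ => ?_
          by_cases h : (j', s') = (j, s)
          · simp [h]
          · simp only [h, if_false]
            have hind : IndepFun (M j s) (M j' s') μ :=
              hMindep j s j' s' (fun hh => h (by
                rw [Prod.ext_iff] at hh ⊢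
                exact ⟨hh.1.symm, hh.2.symm⟩))
            have hmm : integral μ (M j s * M j' s') = (∫ ω, M j s ω ∂μ) * (∫ ω, M j' s' ω ∂μ) :=
              hind.integral_mul_eq_mul_integral (hMmeas j s).aestronglyMeasurable (hMmeas j' s').aestronglyMeasurable
            have h2 : ∫ ω, M j s ω * M j' s' ω * (x j' s' / mu j' s') ∂μ
                = (∫ ω, M j s ω * M j' s' ω ∂μ) * (x j' s' / mu j' s') :=
              integral_mul_const _ _
            rw [h2]
            have h3 : (∫ ω, M j s ω * M j' s' ω ∂μ) = mu j s * mu j' s' := by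
              have : (∫ ω, M j s ω * M j' s' ω ∂μ) = integral μ (M j s * M j' s') := rfl
              rw [this, hmm, hMmu, hMmu]
            rw [h3]
            field_simp [(hmu_pos j' s').ne']
      _ = mu j s * S := by
          rw [hSdef, Finset.mul_sum]
          refine Finset.sum_congr rfl fun j' _ => ?_
          rw [Finset.mul_sum]
          refine Finset.sum_congr rfl fun s' _ => ?_
          split
          · ring
          · rfl
  -- pointwise lower bound
  have hcpos : 0 < x j s / mu j s := div_pos hapos (hmu_pos j s)
  have hcle : x j s / mu j s ≤ lam0 := by
    rw [div_le_iff₀ (hmu_pos j s)]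
    calc x j s ≤ lam0 * mu j s := hx_prod j s
      _ = lam0 * mu j s := rfl
  set c1 : ℝ := x j s / mu j s * (3/4) with hc1def
  set c2 : ℝ := -(x j s / mu j s / (4 * lam0)) with hc2def
  have hlow : ∀ ω, c1 * M j s ω + c2 * (M j s ω * B ω) ≤ p ω := by
    intro ω
    rcases hM01 j s ω with h0 | h1
    · rw [h0]
      have := hp0 ω
      have e : c1 * 0 + c2 * (0 * B ω) = 0 := by ring
      rw [e]
      exact this
    · have hAeq : A ω = x j s / mu j s + B ω := by
        rw [hABω ω, h1]; ring
      have hApos : 0 < A ω := by rw [hAeq]; linarith [hB0 ω]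
      rw [hp, if_neg (ne_of_gt hApos), h1, hAeq]
      have hkf := key_frac lam0 (x j s / mu j s) (B ω) hlam0 hcpos hcle (hB0 ω)
      have h4 := mul_le_mul_of_nonneg_right hkf hcpos.le
      calc c1 * 1 + c2 * (1 * B ω)
          = (3/4 - B ω/(4*lam0)) * (x j s / mu j s) := by
            rw [hc1def, hc2def]; ring
        _ ≤ min lam0 (x j s / mu j s + B ω) / (x j s / mu j s + B ω) * (x j s / mu j s) := h4
        _ = min lam0 (x j s / mu j s + B ω) / (x j s / mu j s + B ω) * (1 * x j s / mu j s) := by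
            ring
  -- integrate the bound
  have hpmeas : Measurable p := by
    have : p = fun ω => if A ω = 0 then 0
        else (min lam0 (A ω) / A ω) * (M j s ω * x j s / mu j s) := funext hp
    rw [this]
    refine Measurable.ite (hAmeas (measurableSet_singleton 0)) measurable_const ?_
    exact ((measurable_const.min hAmeas).div hAmeas).mul (((hMmeas j s).mul_const _).div_const _)
  have hpbdd : ∀ ω, |p ω| ≤ x j s / mu j s := by
    intro ω
    refine abs_le.2 ⟨by linarith [hp0 ω], ?_⟩
    rw [hp]
    split
    · exact hcpos.le
    · next h =>
      have hApos : 0 < A ω := lt_of_le_of_ne (hA0 ω) (Ne.symm h)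
      calc (min lam0 (A ω) / A ω) * (M j s ω * x j s / mu j s)
          ≤ 1 * (x j s / mu j s) := by
            apply mul_le_mul
            · rw [div_le_one hApos]; exact min_le_right _ _
            · exact hterm_le j s ω
            · exact hterm_nonneg j s ω
            · norm_num
        _ = x j s / mu j s := one_mul _
  have hpint : Integrable p μ := myIntegrableBdd μ _ _ hpmeas hpbdd
  have hlowint : Integrable (fun ω => c1 * M j s ω + c2 * (M j s ω * B ω)) μ :=
    ((hMint j s).const_mul c1).add (hMBint.const_mul c2)
  have hmono := integral_mono hlowint hpint hlow
  have hEq : ∫ ω, (c1 * M j s ω + c2 * (M j s ω * B ω)) ∂μ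
      = c1 * mu j s + c2 * (mu j s * S) := by
    rw [integral_add ((hMint j s).const_mul c1) (hMBint.const_mul c2),
      integral_const_mul, integral_const_mul, hMmu, hMB]
  rw [hEq] at hmono
  have hfin : x j s / 2 ≤ c1 * mu j s + c2 * (mu j s * S) := by
    rw [hc1def, hc2def]
    have hmu' := hmu_pos j s
    have hl := hlam0
    have e1 : x j s / mu j s * (3/4) * mu j s = 3/4 * x j s := by
      field_simp
    have e2 : x j s / mu j s / (4 * lam0) * (mu j s * S) = x j s * S / (4 * lam0) := by
      field_simp
    have e3 : -(x j s / mu j s / (4 * lam0)) * (mu j s * S)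
        = -(x j s * S / (4 * lam0)) := by
      rw [← e2]; ring
    rw [e3]
    have h5 : x j s * S / (4 * lam0) ≤ x j s / 4 := by
      rw [div_le_iff₀ (by positivity)]
      nlinarith [mul_le_mul_of_nonneg_left hSle hapos.le]
    calc x j s / 2 = 3/4 * x j s - x j s / 4 := by ring
      _ ≤ 3/4 * x j s - x j s * S / (4 * lam0) := by linarith
      _ = x j s / mu j s * (3/4) * mu j s - x j s * S / (4 * lam0) := by rw [e1]
      _ = x j s / mu j s * (3/4) * mu j s + -(x j s * S / (4 * lam0)) := by ring
  exact le_trans hfin hmono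

lemma part2_key {Ω : Type*} [MeasurableSpace Ω] (μ : Measure Ω) [IsProbabilityMeasure μ]
    {T I J : ℕ}
    (rw : Fin I → Fin J → Fin T → Fin T → ℝ)
    (Λ : Fin I → Fin T → Ω → ℝ) (M : Fin J → Fin T → Ω → ℝ)
    (hΛmeas : ∀ i t, Measurable (Λ i t)) (hMmeas : ∀ j s, Measurable (M j s))
    (hΛ01 : ∀ i t ω, Λ i t ω = 0 ∨ Λ i t ω = 1)
    (hM01 : ∀ j s ω, M j s ω = 0 ∨ M j s ω = 1)
    (hΛMindep : ∀ i t j s, IndepFun (Λ i t) (M j s) μ)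
    (lam : Fin I → Fin T → ℝ) (mu : Fin J → Fin T → ℝ)
    (hΛval : ∀ i t, ∫ ω, Λ i t ω ∂μ = lam i t)
    (hMval : ∀ j s, ∫ ω, M j s ω ∂μ = mu j s)
    (VOFF : Ω → ℝ)
    (hVOFF : ∀ ω, IsGreatest
      {v : ℝ | ∃ x : Fin I → Fin J → Fin T → Fin T → ℝ,
        (∀ i j t s, 0 ≤ x i j t s) ∧
        (∀ j s, ∑ i, ∑ t, x i j t s ≤ M j s ω) ∧
        (∀ i t, ∑ j, ∑ s, x i j t s ≤ Λ i t ω) ∧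
        (∀ i j t s, x i j t s ≤ Λ i t ω * M j s ω) ∧
        (∀ i j t s, t < s → x i j t s = 0) ∧
        v = ∑ i, ∑ j, ∑ t, ∑ s, x i j t s * rw i j t s} (VOFF ω))
    (LPstar : ℝ)
    (hub : ∀ x : Fin I → Fin J → Fin T → Fin T → ℝ,
      (∀ i j t s, 0 ≤ x i j t s) →
      (∀ j s, ∑ i, ∑ t, x i j t s ≤ mu j s) →
      (∀ i t, ∑ j, ∑ s, x i j t s ≤ lam i t) →
      (∀ i j t s, x i j t s ≤ lam i t * mu j s) →
      (∀ i j t s, t < s → x i j t s = 0) →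
      (∑ i, ∑ j, ∑ t, ∑ s, x i j t s * rw i j t s) ≤ LPstar) :
    ∫ ω, VOFF ω ∂μ ≤ LPstar := by
  classical
  have hΛ0le : ∀ i t ω, 0 ≤ Λ i t ω := fun i t ω => by
    rcases hΛ01 i t ω with h|h <;> rw [h] <;> norm_num
  have hΛle1 : ∀ i t ω, Λ i t ω ≤ 1 := fun i t ω => by
    rcases hΛ01 i t ω with h|h <;> rw [h] <;> norm_num
  have hM0le : ∀ j s ω, 0 ≤ M j s ω := fun j s ω => by
    rcases hM01 j s ω with h|h <;> rw [h] <;> norm_num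
  have hMle1 : ∀ j s ω, M j s ω ≤ 1 := fun j s ω => by
    rcases hM01 j s ω with h|h <;> rw [h] <;> norm_num
  have hMint : ∀ j s, Integrable (M j s) μ := fun j s =>
    myIntegrableBdd μ _ 1 (hMmeas j s)
      (fun ω => abs_le.2 ⟨by linarith [hM0le j s ω], hMle1 j s ω⟩)
  have hΛint : ∀ i t, Integrable (Λ i t) μ := fun i t =>
    myIntegrableBdd μ _ 1 (hΛmeas i t)
      (fun ω => abs_le.2 ⟨by linarith [hΛ0le i t ω], hΛle1 i t ω⟩)
  set π : Ω → (((Fin I × Fin T) → Bool) × ((Fin J × Fin T) → Bool)) :=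
    fun ω => (fun it => decide (Λ it.1 it.2 ω = 1), fun js => decide (M js.1 js.2 ω = 1))
    with hπdef
  have hπrec : ∀ ω ω', π ω = π ω' →
      (∀ i t, Λ i t ω = Λ i t ω') ∧ (∀ j s, M j s ω = M j s ω') := by
    intro ω ω' h
    constructor
    · intro i t
      have h1 : decide (Λ i t ω = 1) = decide (Λ i t ω' = 1) :=
        congrFun (congrArg Prod.fst h) (i, t)
      rcases hΛ01 i t ω with h2|h2 <;> rcases hΛ01 i t ω' with h3|h3 <;>
        rw [h2, h3] <;> rw [h2, h3] at h1 <;>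
        first
          | rfl
          | (simp only [decide_eq_decide] at h1; norm_num at h1)
    · intro j s
      have h1 : decide (M j s ω = 1) = decide (M j s ω' = 1) :=
        congrFun (congrArg Prod.snd h) (j, s)
      rcases hM01 j s ω with h2|h2 <;> rcases hM01 j s ω' with h3|h3 <;>
        rw [h2, h3] <;> rw [h2, h3] at h1 <;>
        first
          | rfl
          | (simp only [decide_eq_decide] at h1; norm_num at h1)
  have main : ∃ F : (((Fin I × Fin T) → Bool) × ((Fin J × Fin T) → Bool)) →
      Fin I → Fin J → Fin T → Fin T → ℝ, ∀ ω,
      (∀ i j t s, 0 ≤ F (π ω) i j t s) ∧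
      (∀ j s, ∑ i, ∑ t, F (π ω) i j t s ≤ M j s ω) ∧
      (∀ i t, ∑ j, ∑ s, F (π ω) i j t s ≤ Λ i t ω) ∧
      (∀ i j t s, F (π ω) i j t s ≤ Λ i t ω * M j s ω) ∧
      (∀ i j t s, t < s → F (π ω) i j t s = 0) ∧
      VOFF ω = ∑ i, ∑ j, ∑ t, ∑ s, F (π ω) i j t s * rw i j t s := by
    refine ⟨fun b => if h : ∃ ω', π ω' = b then Classical.choose (hVOFF h.choose).1 else 0, ?_⟩
    intro ω
    have hex : ∃ ω', π ω' = π ω := ⟨ω, rfl⟩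
    simp only [dif_pos hex]
    have hpat : π hex.choose = π ω := hex.choose_spec
    obtain ⟨hΛeq, hMeq⟩ := hπrec hex.choose ω hpat
    obtain ⟨h1, h2, h3, h4, h5, h6⟩ := Classical.choose_spec (hVOFF hex.choose).1
    have hsetEq : {v : ℝ | ∃ x : Fin I → Fin J → Fin T → Fin T → ℝ,
        (∀ i j t s, 0 ≤ x i j t s) ∧
        (∀ j s, ∑ i, ∑ t, x i j t s ≤ M j s hex.choose) ∧
        (∀ i t, ∑ j, ∑ s, x i j t s ≤ Λ i t hex.choose) ∧
        (∀ i j t s, x i j t s ≤ Λ i t hex.choose * M j s hex.choose) ∧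
        (∀ i j t s, t < s → x i j t s = 0) ∧
        v = ∑ i, ∑ j, ∑ t, ∑ s, x i j t s * rw i j t s} =
        {v : ℝ | ∃ x : Fin I → Fin J → Fin T → Fin T → ℝ,
        (∀ i j t s, 0 ≤ x i j t s) ∧
        (∀ j s, ∑ i, ∑ t, x i j t s ≤ M j s ω) ∧
        (∀ i t, ∑ j, ∑ s, x i j t s ≤ Λ i t ω) ∧
        (∀ i j t s, x i j t s ≤ Λ i t ω * M j s ω) ∧
        (∀ i j t s, t < s → x i j t s = 0) ∧
        v = ∑ i, ∑ j, ∑ t, ∑ s, x i j t s * rw i j t s} := by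
      simp only [hΛeq, hMeq]
    have hVeq : VOFF ω = VOFF hex.choose := (hVOFF ω).unique (hsetEq ▸ hVOFF hex.choose)
    refine ⟨h1, fun j s => ?_, fun i t => ?_, fun i j t s => ?_, h5, ?_⟩
    · rw [← hMeq j s]; exact h2 j s
    · rw [← hΛeq i t]; exact h3 i t
    · rw [← hΛeq i t, ← hMeq j s]; exact h4 i j t s
    · rw [hVeq]; exact h6
  obtain ⟨F, hF⟩ := main
  have hSb : ∀ b, MeasurableSet {ω | π ω = b} := by
    intro b
    have hset : {ω | π ω = b} =
        (⋂ it : Fin I × Fin T, {ω | decide (Λ it.1 it.2 ω = 1) = b.1 it}) ∩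
        (⋂ js : Fin J × Fin T, {ω | decide (M js.1 js.2 ω = 1) = b.2 js}) := by
      ext ω
      simp only [hπdef, Set.mem_setOf_eq, Set.mem_inter_iff, Set.mem_iInter,
        Prod.ext_iff, funext_iff]
    rw [hset]
    refine MeasurableSet.inter (MeasurableSet.iInter fun it => ?_)
      (MeasurableSet.iInter fun js => ?_)
    · cases hb : b.1 it
      · have he : {ω | decide (Λ it.1 it.2 ω = 1) = false} = {ω | Λ it.1 it.2 ω = 1}ᶜ := by
          ext ω; simp
        rw [he]; exact (hΛmeas it.1 it.2 (measurableSet_singleton 1)).compl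
      · have he : {ω | decide (Λ it.1 it.2 ω = 1) = true} = {ω | Λ it.1 it.2 ω = 1} := by
          ext ω; simp
        rw [he]; exact hΛmeas it.1 it.2 (measurableSet_singleton 1)
    · cases hb : b.2 js
      · have he : {ω | decide (M js.1 js.2 ω = 1) = false} = {ω | M js.1 js.2 ω = 1}ᶜ := by
          ext ω; simp
        rw [he]; exact (hMmeas js.1 js.2 (measurableSet_singleton 1)).compl
      · have he : {ω | decide (M js.1 js.2 ω = 1) = true} = {ω | M js.1 js.2 ω = 1} := by
          ext ω; simp
        rw [he]; exact hMmeas js.1 js.2 (measurableSet_singleton 1)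
  have hFrep : ∀ (i : Fin I) (j : Fin J) (t s : Fin T),
      (fun ω => F (π ω) i j t s) =
      fun ω => ∑ b, Set.indicator {ω' | π ω' = b} (fun _ => F b i j t s) ω := by
    intro i j t s
    funext ω
    symm
    simp only [Set.indicator_apply, Set.mem_setOf_eq]
    rw [Finset.sum_ite_eq]
    simp
  have hFint : ∀ (i : Fin I) (j : Fin J) (t s : Fin T),
      Integrable (fun ω => F (π ω) i j t s) μ := by
    intro i j t s
    rw [hFrep]
    exact integrable_finset_sum _ (fun b _ => (integrable_const _).indicator (hSb b))
  have hval : ∫ ω, VOFF ω ∂μ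
      = ∑ i, ∑ j, ∑ t, ∑ s, (∫ ω, F (π ω) i j t s ∂μ) * rw i j t s := by
    have h1 : ∫ ω, VOFF ω ∂μ
        = ∫ ω, ∑ i, ∑ j, ∑ t, ∑ s, F (π ω) i j t s * rw i j t s ∂μ :=
      integral_congr_ae (ae_of_all _ (fun ω => (hF ω).2.2.2.2.2))
    rw [h1]
    rw [integral_finset_sum _ (fun i _ => integrable_finset_sum _ (fun j _ =>
      integrable_finset_sum _ (fun t _ => integrable_finset_sum _ (fun s _ =>
        (hFint i j t s).mul_const _))))]
    refine Finset.sum_congr rfl fun i _ => ?_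
    rw [integral_finset_sum _ (fun j _ => integrable_finset_sum _ (fun t _ =>
      integrable_finset_sum _ (fun s _ => (hFint i j t s).mul_const _)))]
    refine Finset.sum_congr rfl fun j _ => ?_
    rw [integral_finset_sum _ (fun t _ => integrable_finset_sum _ (fun s _ =>
      (hFint i j t s).mul_const _))]
    refine Finset.sum_congr rfl fun t _ => ?_
    rw [integral_finset_sum _ (fun s _ => (hFint i j t s).mul_const _)]
    exact Finset.sum_congr rfl fun s _ => integral_mul_const _ _
  rw [hval]
  refine hub _ ?_ ?_ ?_ ?_ ?_
  · intro i j t s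
    exact integral_nonneg fun ω => (hF ω).1 i j t s
  · intro j s
    calc ∑ i, ∑ t, ∫ ω, F (π ω) i j t s ∂μ
        = ∫ ω, ∑ i, ∑ t, F (π ω) i j t s ∂μ := by
          rw [integral_finset_sum _ (fun i _ => integrable_finset_sum _ (fun t _ =>
            hFint i j t s))]
          exact Finset.sum_congr rfl fun i _ =>
            (integral_finset_sum _ (fun t _ => hFint i j t s)).symm
      _ ≤ ∫ ω, M j s ω ∂μ :=
          integral_mono (integrable_finset_sum _ (fun i _ => integrable_finset_sum _
            (fun t _ => hFint i j t s))) (hMint j s) (fun ω => (hF ω).2.1 j s)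
      _ = mu j s := hMval j s
  · intro i t
    calc ∑ j, ∑ s, ∫ ω, F (π ω) i j t s ∂μ
        = ∫ ω, ∑ j, ∑ s, F (π ω) i j t s ∂μ := by
          rw [integral_finset_sum _ (fun j _ => integrable_finset_sum _ (fun s _ =>
            hFint i j t s))]
          exact Finset.sum_congr rfl fun j _ =>
            (integral_finset_sum _ (fun s _ => hFint i j t s)).symm
      _ ≤ ∫ ω, Λ i t ω ∂μ :=
          integral_mono (integrable_finset_sum _ (fun j _ => integrable_finset_sum _
            (fun s _ => hFint i j t s))) (hΛint i t) (fun ω => (hF ω).2.2.1 i t)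
      _ = lam i t := hΛval i t
  · intro i j t s
    have hprodint : Integrable (fun ω => Λ i t ω * M j s ω) μ := by
      refine myIntegrableBdd μ _ 1 ((hΛmeas i t).mul (hMmeas j s)) (fun ω => abs_le.2 ⟨?_, ?_⟩)
      · have := mul_nonneg (hΛ0le i t ω) (hM0le j s ω); linarith
      · calc Λ i t ω * M j s ω ≤ 1 * 1 :=
            mul_le_mul (hΛle1 i t ω) (hMle1 j s ω) (hM0le j s ω) (by norm_num)
          _ = 1 := one_mul 1
    calc ∫ ω, F (π ω) i j t s ∂μ
        ≤ ∫ ω, Λ i t ω * M j s ω ∂μ :=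
          integral_mono (hFint i j t s) hprodint (fun ω => (hF ω).2.2.2.1 i j t s)
      _ = lam i t * mu j s := by
          have hm := (hΛMindep i t j s).integral_mul_eq_mul_integral
            (hΛmeas i t).aestronglyMeasurable (hMmeas j s).aestronglyMeasurable
          calc ∫ ω, Λ i t ω * M j s ω ∂μ = integral μ (Λ i t * M j s) := rfl
            _ = (∫ ω, Λ i t ω ∂μ) * ∫ ω, M j s ω ∂μ := hm
            _ = lam i t * mu j s := by rw [hΛval, hMval]
  · intro i j t s hts
    have hz : ∀ ω, F (π ω) i j t s = 0 := fun ω => (hF ω).2.2.2.2.1 i j t s hts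
    simp only [hz, integral_zero]

/-- **Half-LP lower bound for the routed reward.** If `x*` is an optimal solution of the
deterministic LP and `p_{ijts}(M)` are the routing probabilities built from `x*`, then
`Σ_{i,j,t,s} r_{ijts} E[p_{ijts}(M)] ≥ LP*/2 ≥ E[V^OFF(Λ,M)]/2`. -/
theorem routed_reward_ge_half_LP
    {Ω : Type*} [MeasurableSpace Ω] (μ : Measure Ω) [IsProbabilityMeasure μ]
    (T I J : ℕ) (hT : 1 ≤ T) (hI : 1 ≤ I) (hJ : 1 ≤ J)
    (rw : Fin I → Fin J → Fin T → Fin T → ℝ) (hrw : ∀ i j t s, 0 ≤ rw i j t s)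
    (Λ : Fin I → Fin T → Ω → ℝ) (M : Fin J → Fin T → Ω → ℝ)
    (hΛmeas : ∀ i t, Measurable (Λ i t)) (hMmeas : ∀ j s, Measurable (M j s))
    (hΛ01 : ∀ i t ω, Λ i t ω = 0 ∨ Λ i t ω = 1)
    (hM01 : ∀ j s ω, M j s ω = 0 ∨ M j s ω = 1)
    (hindep : iIndepFun
      (m := fun _ : (Fin I × Fin T) ⊕ (Fin J × Fin T) => (inferInstance : MeasurableSpace ℝ))
      (Sum.elim (fun it ω => Λ it.1 it.2 ω) (fun js ω => M js.1 js.2 ω)) μ)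
    (lam : Fin I → Fin T → ℝ) (mu : Fin J → Fin T → ℝ)
    (hlam : ∀ i t, (μ {ω | Λ i t ω = 1}).toReal = lam i t)
    (hmu : ∀ j s, (μ {ω | M j s ω = 1}).toReal = mu j s)
    (hlam_pos : ∀ i t, 0 < lam i t) (hmu_pos : ∀ j s, 0 < mu j s)
    -- offline matching value, for each realization:
    (VOFF : Ω → ℝ)
    (hVOFF : ∀ ω, IsGreatest
      {v : ℝ | ∃ x : Fin I → Fin J → Fin T → Fin T → ℝ,
        (∀ i j t s, 0 ≤ x i j t s) ∧
        (∀ j s, ∑ i, ∑ t, x i j t s ≤ M j s ω) ∧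
        (∀ i t, ∑ j, ∑ s, x i j t s ≤ Λ i t ω) ∧
        (∀ i j t s, x i j t s ≤ Λ i t ω * M j s ω) ∧
        (∀ i j t s, t < s → x i j t s = 0) ∧
        v = ∑ i, ∑ j, ∑ t, ∑ s, x i j t s * rw i j t s} (VOFF ω))
    -- LP value and an optimal solution x*:
    (LPstar : ℝ) (xstar : Fin I → Fin J → Fin T → Fin T → ℝ)
    (hLPstar : IsGreatest
      {v : ℝ | ∃ x : Fin I → Fin J → Fin T → Fin T → ℝ,
        (∀ i j t s, 0 ≤ x i j t s) ∧
        (∀ j s, ∑ i, ∑ t, x i j t s ≤ mu j s) ∧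
        (∀ i t, ∑ j, ∑ s, x i j t s ≤ lam i t) ∧
        (∀ i j t s, x i j t s ≤ lam i t * mu j s) ∧
        (∀ i j t s, t < s → x i j t s = 0) ∧
        v = ∑ i, ∑ j, ∑ t, ∑ s, x i j t s * rw i j t s} LPstar)
    (hxstar_nonneg : ∀ i j t s, 0 ≤ xstar i j t s)
    (hxstar_mu : ∀ j s, ∑ i, ∑ t, xstar i j t s ≤ mu j s)
    (hxstar_lam : ∀ i t, ∑ j, ∑ s, xstar i j t s ≤ lam i t)
    (hxstar_prod : ∀ i j t s, xstar i j t s ≤ lam i t * mu j s)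
    (hxstar_zero : ∀ i j t s, t < s → xstar i j t s = 0)
    (hxstar_opt : ∑ i, ∑ j, ∑ t, ∑ s, xstar i j t s * rw i j t s = LPstar)
    -- routing probabilities built from x*:
    (A : Fin I → Fin T → Ω → ℝ)
    (hA : ∀ i t ω, A i t ω = ∑ j', ∑ s' ∈ Finset.Iic t, M j' s' ω * xstar i j' t s' / mu j' s')
    (p : Fin I → Fin J → Fin T → Fin T → Ω → ℝ)
    (hp : ∀ i j t s ω, p i j t s ω =
      if A i t ω = 0 then 0
      else (min (lam i t) (A i t ω) / A i t ω) * (M j s ω * xstar i j t s / mu j s)) :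
    (1 / 2 : ℝ) * LPstar ≤ ∑ i, ∑ j, ∑ t, ∑ s, rw i j t s * ∫ ω, p i j t s ω ∂μ ∧
    (1 / 2 : ℝ) * ∫ ω, VOFF ω ∂μ ≤ (1 / 2 : ℝ) * LPstar := by
  have hMmu : ∀ j s, ∫ ω, M j s ω ∂μ = mu j s := fun j s =>
    (myInt01 μ (M j s) (hMmeas j s) (hM01 j s)).trans (hmu j s)
  have hΛval : ∀ i t, ∫ ω, Λ i t ω ∂μ = lam i t := fun i t =>
    (myInt01 μ (Λ i t) (hΛmeas i t) (hΛ01 i t)).trans (hlam i t)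
  have hMindep : ∀ j₁ s₁ j₂ s₂, ((j₁,s₁) : Fin J × Fin T) ≠ (j₂,s₂) →
      IndepFun (M j₁ s₁) (M j₂ s₂) μ := by
    intro j₁ s₁ j₂ s₂ hne
    have h := hindep.indepFun
      (show (Sum.inr (j₁,s₁) : (Fin I × Fin T) ⊕ (Fin J × Fin T)) ≠ Sum.inr (j₂,s₂) by
        simpa using hne)
    exact h
  have hΛMindep : ∀ i t j s, IndepFun (Λ i t) (M j s) μ := by
    intro i t j s
    have h := hindep.indepFun
      (show (Sum.inl (i,t) : (Fin I × Fin T) ⊕ (Fin J × Fin T)) ≠ Sum.inr (j,s) by simp)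
    exact h
  constructor
  · -- Part 1
    have hpkey : ∀ i j t s, xstar i j t s / 2 ≤ ∫ ω, p i j t s ω ∂μ := by
      intro i j t s
      by_cases hst : s ≤ t
      · exact part1_key μ t j s (lam i t) (hlam_pos i t) mu hmu_pos M hMmeas hM01 hMmu hMindep
          (fun j' s' => xstar i j' t s') (fun j' s' => hxstar_nonneg i j' t s')
          (hxstar_lam i t) (fun j' s' => hxstar_prod i j' t s')
          (A i t) (hA i t) hst (p i j t s) (hp i j t s)
      · have hz : xstar i j t s = 0 := hxstar_zero i j t s (lt_of_not_ge hst)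
        have hzero : ∀ ω, p i j t s ω = 0 := by
          intro ω; rw [hp]
          split
          · rfl
          · rw [hz]; ring
        have hI : (∫ ω, p i j t s ω ∂μ) = 0 := by simp [hzero]
        rw [hI, hz]; norm_num
    have hstep : ∀ i j t s, (1/2 : ℝ) * (xstar i j t s * rw i j t s)
        ≤ rw i j t s * ∫ ω, p i j t s ω ∂μ := by
      intro i j t s
      have h := mul_le_mul_of_nonneg_left (hpkey i j t s) (hrw i j t s)
      calc (1/2 : ℝ) * (xstar i j t s * rw i j t s)
          = rw i j t s * (xstar i j t s / 2) := by ring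
        _ ≤ rw i j t s * ∫ ω, p i j t s ω ∂μ := h
    calc (1/2 : ℝ) * LPstar
        = ∑ i, ∑ j, ∑ t, ∑ s, (1/2 : ℝ) * (xstar i j t s * rw i j t s) := by
          rw [← hxstar_opt]
          simp only [Finset.mul_sum]
      _ ≤ ∑ i, ∑ j, ∑ t, ∑ s, rw i j t s * ∫ ω, p i j t s ω ∂μ :=
          Finset.sum_le_sum fun i _ => Finset.sum_le_sum fun j _ =>
            Finset.sum_le_sum fun t _ => Finset.sum_le_sum fun s _ => hstep i j t s
  · -- Part 2
    have h := part2_key μ rw Λ M hΛmeas hMmeas hΛ01 hM01 hΛMindep lam mu hΛval hMmu VOFF hVOFF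
      LPstar (fun x h1 h2 h3 h4 h5 => hLPstar.2 ⟨x, h1, h2, h3, h4, h5, rfl⟩)
    linarith
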